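/- Let X be a normed linear space, let E be a dense linear subspace of X, and let M be a closed linear subspace of X of finite codimension. Then E ∩ M is dense in M. -/

import Mathlib

set_option synthInstance.maxHeartbeats 1000000 in
set_option maxHeartbeats 1000000 in
/-- If `E` is a dense linear subspace of a real normed space `X` and `M` is a closed
linear subspace of `X` of finite codimension (i.e. `X ⧸ M` is finite dimensional),
then `E ∩ M` is dense in `M`. -/
theorem dense_inter_of_dense_of_closed_finiteCodim
    {X : Type*} [NormedAddCommGroup X] [NormedSpace ℝ X]
    (E M : Submodule ℝ X) (hE : Dense (E : Set X))
    (hM : IsClosed (M : Set X)) (hcodim : FiniteDimensional ℝ (X ⧸ M)) :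
    (M : Set X) ⊆ closure ((E ⊓ M : Submodule ℝ X) : Set X) := by
  haveI := hM
  haveI := hcodim
  -- the quotient map as a continuous linear map
  let π : X →L[ℝ] (X ⧸ M) := M.mkQ.mkContinuous 1 (by
    intro x
    simpa using Submodule.Quotient.norm_mk_le M x)
  -- image of E under π is all of X ⧸ M
  have hsurj : Submodule.map M.mkQ E = ⊤ := by
    have hd : Dense ((Submodule.map M.mkQ E : Submodule ℝ (X ⧸ M)) : Set (X ⧸ M)) := by
      have hdr : DenseRange (M.mkQ : X → X ⧸ M) :=
        (Submodule.Quotient.mk_surjective M).denseRange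
      have := hdr.dense_image π.continuous hE
      simpa [Submodule.map_coe] using this
    have hclosed : IsClosed ((Submodule.map M.mkQ E : Submodule ℝ (X ⧸ M)) : Set (X ⧸ M)) :=
      (Submodule.map M.mkQ E).closed_of_finiteDimensional
    refine Submodule.eq_top_iff'.2 fun x => ?_
    have : (Submodule.map M.mkQ E : Set (X ⧸ M)) = Set.univ := by
      rw [← hclosed.closure_eq]; exact hd.closure_eq
    exact Set.eq_univ_iff_forall.1 this x
  -- choose a linear section σ : X ⧸ M →ₗ X with values in E
  obtain ⟨σ, hσE, hσsec⟩ : ∃ σ : (X ⧸ M) →ₗ[ℝ] X, (∀ y, σ y ∈ E) ∧ ∀ y, M.mkQ (σ y) = y := by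
    let b := Module.finBasis ℝ (X ⧸ M)
    have hb : ∀ i, ∃ e ∈ E, M.mkQ e = b i := by
      intro i
      have : (b i) ∈ Submodule.map M.mkQ E := hsurj ▸ Submodule.mem_top
      obtain ⟨e, he, heq⟩ := this
      exact ⟨e, he, heq⟩
    choose e heE heq using hb
    refine ⟨b.constr ℝ e, ?_, ?_⟩
    · intro y
      rw [Module.Basis.constr_apply_fintype]
      exact Submodule.sum_mem E fun i _ => Submodule.smul_mem E _ (heE i)
    · intro y
      have : M.mkQ.comp (b.constr ℝ e) = LinearMap.id := by
        apply b.ext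
        intro i
        simp [heq i]
      exact LinearMap.congr_fun this y
  -- the continuous projection onto the "E part"
  let P : X →L[ℝ] X := (LinearMap.toContinuousLinearMap σ).comp π
  have hP : ∀ x : X, P x = σ (M.mkQ x) := fun _ => rfl
  -- finish by an ε-argument
  intro m hm
  rw [Metric.mem_closure_iff]
  intro ε hε
  have hpos : (0:ℝ) < 1 + ‖P‖ := by positivity
  obtain ⟨e, heE, hde⟩ := Metric.mem_closure_iff.1 (hE m) (ε / (1 + ‖P‖)) (by positivity)
  refine ⟨e - P e, ?_, ?_⟩
  · refine Submodule.mem_inf.2 ⟨Submodule.sub_mem E heE (by rw [hP]; exact hσE _), ?_⟩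
    rw [← Submodule.Quotient.mk_eq_zero M, ← Submodule.mkQ_apply, map_sub, hP,
      hσsec, sub_self]
  · have hPm : P m = 0 := by
      have h0 : M.mkQ m = 0 := (Submodule.Quotient.mk_eq_zero M).2 hm
      rw [hP, h0, map_zero]
    have : m - (e - P e) = (m - e) - P (m - e) := by
      rw [map_sub, hPm]; abel
    calc dist m (e - P e) = ‖m - (e - P e)‖ := by rw [dist_eq_norm]
      _ = ‖(m - e) - P (m - e)‖ := by rw [this]
      _ ≤ ‖m - e‖ + ‖P (m - e)‖ := norm_sub_le _ _
      _ ≤ ‖m - e‖ + ‖P‖ * ‖m - e‖ := by linarith [P.le_opNorm (m - e)]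
      _ = (1 + ‖P‖) * ‖m - e‖ := by ring
      _ < (1 + ‖P‖) * (ε / (1 + ‖P‖)) := by
          have : ‖m - e‖ < ε / (1 + ‖P‖) := by rwa [dist_eq_norm] at hde
          exact (mul_lt_mul_iff_right₀ hpos).2 this
      _ = ε := by field_simp
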